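/- Let γ ∈ (0,1], b ≥ 0 and T > 0. Then there exists a constant C ≥ 1, depending only on γ, b and T, such that for every a ≥ 0 and every continuous nonnegative function u : [0,T] → ℝ satisfying u(t) ≤ a + b ∫₀ᵗ (t − s)^{γ−1} u(s) ds for all t ∈ [0,T], one has u(t) ≤ a C for all t ∈ [0,T]. -/

import Mathlib

open intervalIntegral Real MeasureTheory

lemma aux_integrable' (γ lam : ℝ) (hγ0 : 0 < γ) (a b : ℝ) :
    IntervalIntegrable (fun r : ℝ => r ^ (γ - 1) * Real.exp (-(lam * r))) volume a b := by
  exact (intervalIntegrable_rpow' (by linarith)).mul_continuousOn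
    (Continuous.continuousOn (by continuity))

lemma aux_bound (γ δ lam T : ℝ) (hγ0 : 0 < γ) (hγ1 : γ ≤ 1) (hδ : 0 < δ) (hlam : 0 ≤ lam)
    (t : ℝ) (ht0 : 0 ≤ t) (htT : t ≤ T) :
    (∫ r in (0:ℝ)..t, r ^ (γ - 1) * Real.exp (-(lam * r)))
      ≤ δ ^ γ / γ + δ ^ (γ - 1) * T * Real.exp (-(lam * δ)) := by
  have hTpos : 0 ≤ T := le_trans ht0 htT
  have hval : ∀ d : ℝ, 0 ≤ d → (∫ r in (0:ℝ)..d, r ^ (γ - 1)) = d ^ γ / γ := by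
    intro d hd
    rw [integral_rpow (Or.inl (by linarith))]
    simp [sub_add_cancel, Real.zero_rpow (by positivity : γ ≠ 0)]
  have hsecond_nonneg : 0 ≤ δ ^ (γ - 1) * T * Real.exp (-(lam * δ)) := by positivity
  rcases le_or_gt t δ with h | h
  · calc (∫ r in (0:ℝ)..t, r ^ (γ - 1) * Real.exp (-(lam * r)))
        ≤ ∫ r in (0:ℝ)..t, r ^ (γ - 1) := by
          apply intervalIntegral.integral_mono_on ht0 (aux_integrable' γ lam hγ0 0 t)
            (intervalIntegrable_rpow' (by linarith))
          intro s hs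
          have h1 : Real.exp (-(lam * s)) ≤ 1 := by
            rw [Real.exp_le_one_iff]; nlinarith [hs.1]
          nlinarith [Real.rpow_nonneg hs.1 (γ - 1), Real.exp_pos (-(lam * s))]
      _ = t ^ γ / γ := hval t ht0
      _ ≤ δ ^ γ / γ := by
          have := Real.rpow_le_rpow ht0 h hγ0.le
          gcongr
      _ ≤ _ := le_add_of_nonneg_right hsecond_nonneg
  · have hsplit : (∫ r in (0:ℝ)..t, r ^ (γ - 1) * Real.exp (-(lam * r)))
        = (∫ r in (0:ℝ)..δ, r ^ (γ - 1) * Real.exp (-(lam * r)))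
          + ∫ r in δ..t, r ^ (γ - 1) * Real.exp (-(lam * r)) := by
      rw [intervalIntegral.integral_add_adjacent_intervals
        (aux_integrable' γ lam hγ0 0 δ) (aux_integrable' γ lam hγ0 δ t)]
    rw [hsplit]
    have h1 : (∫ r in (0:ℝ)..δ, r ^ (γ - 1) * Real.exp (-(lam * r))) ≤ δ ^ γ / γ := by
      calc (∫ r in (0:ℝ)..δ, r ^ (γ - 1) * Real.exp (-(lam * r)))
          ≤ ∫ r in (0:ℝ)..δ, r ^ (γ - 1) := by
            apply intervalIntegral.integral_mono_on hδ.le (aux_integrable' γ lam hγ0 0 δ)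
              (intervalIntegrable_rpow' (by linarith))
            intro s hs
            have h1 : Real.exp (-(lam * s)) ≤ 1 := by
              rw [Real.exp_le_one_iff]; nlinarith [hs.1]
            nlinarith [Real.rpow_nonneg hs.1 (γ - 1), Real.exp_pos (-(lam * s))]
        _ = δ ^ γ / γ := hval δ hδ.le
    have h2 : (∫ r in δ..t, r ^ (γ - 1) * Real.exp (-(lam * r)))
        ≤ δ ^ (γ - 1) * T * Real.exp (-(lam * δ)) := by
      calc (∫ r in δ..t, r ^ (γ - 1) * Real.exp (-(lam * r)))
          ≤ ∫ _r in δ..t, δ ^ (γ - 1) * Real.exp (-(lam * δ)) := by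
            apply intervalIntegral.integral_mono_on h.le (aux_integrable' γ lam hγ0 δ t)
              intervalIntegrable_const
            intro s hs
            have hb1 : s ^ (γ - 1) ≤ δ ^ (γ - 1) :=
              Real.rpow_le_rpow_of_nonpos hδ hs.1 (by linarith)
            have hb2 : Real.exp (-(lam * s)) ≤ Real.exp (-(lam * δ)) := by
              apply Real.exp_le_exp.mpr; nlinarith [hs.1]
            have := Real.rpow_nonneg (le_trans hδ.le hs.1) (γ - 1)
            nlinarith [Real.exp_pos (-(lam * s)), Real.exp_pos (-(lam * δ)),
              Real.rpow_nonneg hδ.le (γ-1)]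
        _ = (t - δ) * (δ ^ (γ - 1) * Real.exp (-(lam * δ))) := by
            rw [intervalIntegral.integral_const]; simp [smul_eq_mul]
        _ ≤ δ ^ (γ - 1) * T * Real.exp (-(lam * δ)) := by
            have : t - δ ≤ T := by linarith
            have := Real.rpow_nonneg hδ.le (γ - 1)
            nlinarith [Real.exp_pos (-(lam * δ))]
    linarith

-- also need aux_integrable here
lemma aux_integrable (γ : ℝ) (hγ0 : 0 < γ) (t : ℝ) (g : ℝ → ℝ)
    (hg : ContinuousOn g (Set.uIcc 0 t)) :
    IntervalIntegrable (fun s => (t - s) ^ (γ - 1) * g s) volume 0 t := by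
  have h1 : IntervalIntegrable (fun x : ℝ => x ^ (γ - 1)) volume 0 t :=
    intervalIntegrable_rpow' (by linarith)
  have h2 := (h1.comp_sub_left t)
  simp only [sub_zero, sub_self] at h2
  exact h2.symm.mul_continuousOn hg

lemma aux_cov (γ lam t : ℝ) :
    (∫ s in (0:ℝ)..t, (t - s) ^ (γ - 1) * Real.exp (lam * s))
      = Real.exp (lam * t) * ∫ r in (0:ℝ)..t, r ^ (γ - 1) * Real.exp (-(lam * r)) := by
  have : ∀ s : ℝ, (t - s) ^ (γ - 1) * Real.exp (lam * s)
      = Real.exp (lam * t) * ((t - s) ^ (γ - 1) * Real.exp (-(lam * (t - s)))) := by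
    intro s
    rw [show Real.exp (lam * s) = Real.exp (lam * t) * Real.exp (-(lam * (t - s))) by
      rw [← Real.exp_add]; ring_nf]
    ring
  simp_rw [this]
  rw [intervalIntegral.integral_const_mul]
  congr 1
  have := intervalIntegral.integral_comp_sub_left
    (f := fun r : ℝ => r ^ (γ - 1) * Real.exp (-(lam * r))) (a := (0:ℝ)) (b := t) t
  simpa using this


/-- Gronwall lemma with a weakly singular kernel. For
`γ ∈ (0,1]`, `b ≥ 0`, `T > 0` there is a constant `C ≥ 1` (depending only on
`γ, b, T`) such that any continuous nonnegative `u : [0,T] → ℝ` satisfying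
`u(t) ≤ a + b ∫₀ᵗ (t−s)^{γ−1} u(s) ds` on `[0,T]` (with `a ≥ 0`) satisfies
`u(t) ≤ a C` on `[0,T]`. -/
theorem singular_gronwall
    (γ b T : ℝ) (hγ : γ ∈ Set.Ioc (0:ℝ) 1) (hb : 0 ≤ b) (hT : 0 < T) :
    ∃ C : ℝ, 1 ≤ C ∧
      ∀ a : ℝ, 0 ≤ a → ∀ u : ℝ → ℝ,
        ContinuousOn u (Set.Icc 0 T) →
        (∀ t ∈ Set.Icc (0:ℝ) T, 0 ≤ u t) →
        (∀ t ∈ Set.Icc (0:ℝ) T,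
          u t ≤ a + b * ∫ s in (0:ℝ)..t, (t - s) ^ (γ - 1) * u s) →
        ∀ t ∈ Set.Icc (0:ℝ) T, u t ≤ a * C := by
  obtain ⟨hγ0, hγ1⟩ := hγ
  -- choose δ with b * δ^γ / γ ≤ 1/4
  set δ : ℝ := (γ / (4 * (b + 1))) ^ (γ⁻¹) with hδdef
  have hδpos : 0 < δ := Real.rpow_pos_of_pos (by positivity) _
  have hδγ : δ ^ γ = γ / (4 * (b + 1)) := by
    rw [hδdef, Real.rpow_inv_rpow (by positivity) hγ0.ne']
  -- choose lam
  set K : ℝ := 4 * (b + 1) * δ ^ (γ - 1) * T + 1 with hKdef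
  have hK1 : 1 ≤ K := by
    have : 0 ≤ 4 * (b + 1) * δ ^ (γ - 1) * T := by positivity
    linarith
  have hKpos : 0 < K := by linarith
  set lam : ℝ := Real.log K / δ with hlamdef
  have hlam : 0 ≤ lam := div_nonneg (Real.log_nonneg hK1) hδpos.le
  have hexpδ : Real.exp (-(lam * δ)) = K⁻¹ := by
    rw [hlamdef, div_mul_cancel₀ _ hδpos.ne', Real.exp_neg, Real.exp_log hKpos]
  -- the key smallness estimate
  have hhalf : ∀ t ∈ Set.Icc (0:ℝ) T,
      b * (∫ r in (0:ℝ)..t, r ^ (γ - 1) * Real.exp (-(lam * r))) ≤ 1 / 2 := by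
    intro t ht
    have h1 := aux_bound γ δ lam T hγ0 hγ1 hδpos hlam t ht.1 ht.2
    have h2 : b * (δ ^ γ / γ) ≤ 1 / 4 := by
      rw [hδγ]
      have h4 : (0:ℝ) < 4 * (b + 1) := by positivity
      rw [show γ / (4 * (b + 1)) / γ = 1 / (4 * (b + 1)) by field_simp]
      rw [mul_one_div, div_le_div_iff₀ h4 (by norm_num)]
      linarith
    have h3 : b * (δ ^ (γ - 1) * T * Real.exp (-(lam * δ))) ≤ 1 / 4 := by
      rw [hexpδ]
      rw [show b * (δ ^ (γ - 1) * T * K⁻¹) = b * (δ ^ (γ - 1) * T) / K by ring]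
      rw [div_le_iff₀ hKpos, hKdef]
      have hx : 0 ≤ δ ^ (γ - 1) * T := by positivity
      nlinarith [mul_nonneg hb hx]
    calc b * (∫ r in (0:ℝ)..t, r ^ (γ - 1) * Real.exp (-(lam * r)))
        ≤ b * (δ ^ γ / γ + δ ^ (γ - 1) * T * Real.exp (-(lam * δ))) :=
          mul_le_mul_of_nonneg_left h1 hb
      _ = b * (δ ^ γ / γ) + b * (δ ^ (γ - 1) * T * Real.exp (-(lam * δ))) := by ring
      _ ≤ 1 / 2 := by linarith
  refine ⟨2 * Real.exp (lam * T), ?_, ?_⟩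
  · have : 1 ≤ Real.exp (lam * T) := Real.one_le_exp (by positivity)
    linarith
  intro a ha u hu hupos hineq
  -- weighted function
  set v : ℝ → ℝ := fun t => u t * Real.exp (-(lam * t)) with hvdef
  have hv : ContinuousOn v (Set.Icc 0 T) :=
    hu.mul (Real.continuous_exp.comp (continuous_const.mul continuous_id).neg).continuousOn
  obtain ⟨t₀, ht₀, hmax⟩ := isCompact_Icc.exists_isMaxOn
    (Set.nonempty_Icc.mpr hT.le) hv
  set M : ℝ := v t₀ with hMdef
  have hM0 : 0 ≤ M := mul_nonneg (hupos t₀ ht₀) (Real.exp_pos _).le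
  have huleM : ∀ s ∈ Set.Icc (0:ℝ) T, u s ≤ M * Real.exp (lam * s) := by
    intro s hs
    have h1 : v s ≤ M := hmax hs
    have : u s = v s * Real.exp (lam * s) := by
      rw [hvdef]; simp only
      rw [mul_assoc, ← Real.exp_add, neg_add_cancel, Real.exp_zero, mul_one]
    rw [this]
    exact mul_le_mul_of_nonneg_right h1 (Real.exp_pos _).le
  -- main estimate at t₀
  have hsub : Set.uIcc (0:ℝ) t₀ ⊆ Set.Icc 0 T := by
    rw [Set.uIcc_of_le ht₀.1]
    exact Set.Icc_subset_Icc le_rfl ht₀.2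
  have hint1 : IntervalIntegrable (fun s => (t₀ - s) ^ (γ - 1) * u s) volume 0 t₀ :=
    aux_integrable γ hγ0 t₀ u (hu.mono hsub)
  have hint2 : IntervalIntegrable
      (fun s => (t₀ - s) ^ (γ - 1) * (M * Real.exp (lam * s))) volume 0 t₀ :=
    aux_integrable γ hγ0 t₀ _ (Continuous.continuousOn
      (continuous_const.mul (Real.continuous_exp.comp (continuous_const.mul continuous_id))))
  have hmono : (∫ s in (0:ℝ)..t₀, (t₀ - s) ^ (γ - 1) * u s)
      ≤ ∫ s in (0:ℝ)..t₀, (t₀ - s) ^ (γ - 1) * (M * Real.exp (lam * s)) := by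
    apply intervalIntegral.integral_mono_on ht₀.1 hint1 hint2
    intro s hs
    have hker : 0 ≤ (t₀ - s) ^ (γ - 1) := Real.rpow_nonneg (by linarith [hs.2]) _
    exact mul_le_mul_of_nonneg_left
      (huleM s ⟨hs.1, le_trans hs.2 ht₀.2⟩) hker
  have hval : (∫ s in (0:ℝ)..t₀, (t₀ - s) ^ (γ - 1) * (M * Real.exp (lam * s)))
      = M * (Real.exp (lam * t₀) * ∫ r in (0:ℝ)..t₀, r ^ (γ - 1) * Real.exp (-(lam * r))) := by
    have : ∀ s : ℝ, (t₀ - s) ^ (γ - 1) * (M * Real.exp (lam * s))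
        = M * ((t₀ - s) ^ (γ - 1) * Real.exp (lam * s)) := by intro s; ring
    simp_rw [this]
    rw [intervalIntegral.integral_const_mul, aux_cov]
  have hIpos : 0 ≤ ∫ r in (0:ℝ)..t₀, r ^ (γ - 1) * Real.exp (-(lam * r)) := by
    apply intervalIntegral.integral_nonneg ht₀.1
    intro s hs
    exact mul_nonneg (Real.rpow_nonneg hs.1 _) (Real.exp_pos _).le
  -- u t₀ ≤ a + M * exp(lam t₀) / 2
  have hstep : u t₀ ≤ a + M * Real.exp (lam * t₀) * (1 / 2) := by
    have h0 := hineq t₀ ht₀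
    have hh := hhalf t₀ ht₀
    calc u t₀ ≤ a + b * ∫ s in (0:ℝ)..t₀, (t₀ - s) ^ (γ - 1) * u s := h0
      _ ≤ a + b * ∫ s in (0:ℝ)..t₀, (t₀ - s) ^ (γ - 1) * (M * Real.exp (lam * s)) := by
          linarith [mul_le_mul_of_nonneg_left hmono hb]
      _ = a + M * Real.exp (lam * t₀) *
            (b * ∫ r in (0:ℝ)..t₀, r ^ (γ - 1) * Real.exp (-(lam * r))) := by
          rw [hval]; ring
      _ ≤ a + M * Real.exp (lam * t₀) * (1 / 2) := by
          have : 0 ≤ M * Real.exp (lam * t₀) := by positivity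
          nlinarith
  have hM2a : M ≤ 2 * a := by
    set E : ℝ := Real.exp (lam * t₀) with hEdef
    have hEpos : 0 < E := Real.exp_pos _
    have hE1 : 1 ≤ E := Real.one_le_exp (mul_nonneg hlam ht₀.1)
    have hMeq : M = u t₀ * E⁻¹ := by
      rw [hMdef, hvdef]; simp only [hEdef, Real.exp_neg]
    have hle := mul_le_mul_of_nonneg_right hstep (inv_nonneg.mpr hEpos.le)
    rw [← hMeq] at hle
    have hEE : E * E⁻¹ = 1 := mul_inv_cancel₀ hEpos.ne'
    have hexpand : (a + M * E * (1 / 2)) * E⁻¹ = a * E⁻¹ + M * (1 / 2) := by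
      calc (a + M * E * (1 / 2)) * E⁻¹ = a * E⁻¹ + M * (E * E⁻¹) * (1 / 2) := by ring
        _ = a * E⁻¹ + M * (1 / 2) := by rw [hEE]; ring
    have haE : a * E⁻¹ ≤ a := by
      calc a * E⁻¹ ≤ a * 1 := mul_le_mul_of_nonneg_left (inv_le_one_of_one_le₀ hE1) ha
        _ = a := mul_one a
    linarith [hle.trans_eq hexpand]
  intro t ht
  calc u t ≤ M * Real.exp (lam * t) := huleM t ht
    _ ≤ 2 * a * Real.exp (lam * T) := by
        have h1 : Real.exp (lam * t) ≤ Real.exp (lam * T) :=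
          Real.exp_le_exp.mpr (by nlinarith [ht.2])
        nlinarith [Real.exp_pos (lam * t), Real.exp_pos (lam * T), hM2a]
    _ = a * (2 * Real.exp (lam * T)) := by ring
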